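/- Let S be a pre-Hilbert space and let {x₁,…,xₙ} and {y₁,…,yₙ} be finite families of vectors in S with ⟨x_i, x_j⟩ = ⟨y_i, y_j⟩ for all i, j ≤ n. Then there exists a linear isometric automorphism U of S such that U x_i = y_i for all i ≤ n and U is the identity on the orthogonal complement of span{x_i, y_i : i ≤ n} in S. -/

import Mathlib

theorem exists_isometry_mapping_families {𝕜 S : Type*} [RCLike 𝕜]
    [NormedAddCommGroup S] [InnerProductSpace 𝕜 S]
    (n : ℕ) (x y : Fin n → S)
    (h : ∀ i j, (inner 𝕜 (x i) (x j) : 𝕜) = inner 𝕜 (y i) (y j)) :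
    ∃ U : S ≃ₗᵢ[𝕜] S, (∀ i, U (x i) = y i) ∧
      ∀ v ∈ (Submodule.span 𝕜 (Set.range x ∪ Set.range y))ᗮ, U v = v := by
  classical
  set W : Submodule 𝕜 S := Submodule.span 𝕜 (Set.range x ∪ Set.range y) with hWdef
  have hxW : ∀ i, x i ∈ W := fun i => Submodule.subset_span (Or.inl ⟨i, rfl⟩)
  have hyW : ∀ i, y i ∈ W := fun i => Submodule.subset_span (Or.inr ⟨i, rfl⟩)
  haveI : FiniteDimensional 𝕜 W :=
    FiniteDimensional.span_of_finite 𝕜 ((Set.finite_range x).union (Set.finite_range y))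
  set x' : Fin n → W := fun i => ⟨x i, hxW i⟩ with hx'def
  set y' : Fin n → W := fun i => ⟨y i, hyW i⟩ with hy'def
  have h' : ∀ i j, (inner 𝕜 (x' i) (x' j) : 𝕜) = inner 𝕜 (y' i) (y' j) := fun i j => h i j
  set f : (Fin n → 𝕜) →ₗ[𝕜] W := Fintype.linearCombination 𝕜 x' with hfdef
  set g : (Fin n → 𝕜) →ₗ[𝕜] W := Fintype.linearCombination 𝕜 y' with hgdef
  have key : ∀ c d : Fin n → 𝕜, (inner 𝕜 (f c) (f d) : 𝕜) = inner 𝕜 (g c) (g d) := by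
    intro c d
    simp only [hfdef, hgdef, Fintype.linearCombination_apply, sum_inner, inner_sum,
      inner_smul_left, inner_smul_right, h']
  have hker : LinearMap.ker f ≤ LinearMap.ker g := by
    intro c hc
    rw [LinearMap.mem_ker] at hc ⊢
    have hk := key c c
    rw [hc, inner_zero_left] at hk
    exact inner_self_eq_zero.mp hk.symm
  set T : LinearMap.range f →ₗ[𝕜] W :=
    ((LinearMap.ker f).liftQ g hker).comp f.quotKerEquivRange.symm.toLinearMap with hTdef
  have hT : ∀ (c : Fin n → 𝕜) (hm : f c ∈ LinearMap.range f), T ⟨f c, hm⟩ = g c := by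
    intro c hm
    have h1 : f.quotKerEquivRange.symm ⟨f c, hm⟩ = (LinearMap.ker f).mkQ c :=
      f.quotKerEquivRange_symm_apply_image c hm
    rw [hTdef, LinearMap.comp_apply, LinearEquiv.coe_coe, h1]
    exact Submodule.liftQ_apply _ _ c
  have hTinner : ∀ u v : LinearMap.range f, (inner 𝕜 (T u) (T v) : 𝕜) = inner 𝕜 u v := by
    rintro ⟨-, c, rfl⟩ ⟨-, d, rfl⟩
    change inner 𝕜 (T ⟨f c, LinearMap.mem_range_self f c⟩) (T ⟨f d, LinearMap.mem_range_self f d⟩) = inner 𝕜 (⟨f c, LinearMap.mem_range_self f c⟩ : LinearMap.range f) ⟨f d, LinearMap.mem_range_self f d⟩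
    rw [hT c _, hT d _]
    exact (key c d).symm
  set L : LinearMap.range f →ₗᵢ[𝕜] W := LinearMap.isometryOfInner (𝕜 := 𝕜) (E := LinearMap.range f) (E' := W) T hTinner with hLdef
  set UW : W ≃ₗᵢ[𝕜] W := L.extend.toLinearIsometryEquiv rfl with hUWdef
  have hUW : ∀ c : Fin n → 𝕜, UW (f c) = g c := by
    intro c
    have : UW (f c) = L.extend (f c) := rfl
    rw [this, show (f c : W) = ((⟨f c, LinearMap.mem_range_self f c⟩ : LinearMap.range f) : W) from rfl,
      L.extend_apply]
    rw [hLdef, LinearMap.coe_isometryOfInner]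
    exact hT c _
  have hUWx : ∀ i, UW (x' i) = y' i := by
    intro i
    have hfx : f (Pi.single i 1) = x' i := by
      simp [hfdef, Fintype.linearCombination_apply, Pi.single_apply, ite_smul]
    have hgy : g (Pi.single i 1) = y' i := by
      simp [hgdef, Fintype.linearCombination_apply, Pi.single_apply, ite_smul]
    rw [← hfx, ← hgy]; exact hUW _
  -- assemble the global equivalence
  have hcompl : IsCompl W Wᗮ := Submodule.isCompl_orthogonal_of_hasOrthogonalProjection
  set p : (W × Wᗮ) ≃ₗ[𝕜] S := Submodule.prodEquivOfIsCompl W Wᗮ hcompl with hpdef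
  set Eq0 : S ≃ₗ[𝕜] S :=
    p.symm.trans ((UW.toLinearEquiv.prodCongr (LinearEquiv.refl 𝕜 Wᗮ)).trans p) with hEqdef
  have hEqapply : ∀ (a : W) (b : Wᗮ), Eq0 ((a : S) + b) = (UW a : S) + b := by
    intro a b
    have : ((a : S) + b) = p (a, b) := rfl
    rw [hEqdef, this]
    simp only [LinearEquiv.trans_apply, LinearEquiv.symm_apply_apply, LinearEquiv.prodCongr_apply]
    rfl
  have horth1 : ∀ (a : W) (b : Wᗮ), (inner 𝕜 (a : S) (b : S) : 𝕜) = 0 := fun a b =>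
    Submodule.inner_right_of_mem_orthogonal a.2 b.2
  have horth2 : ∀ (b : Wᗮ) (a : W), (inner 𝕜 (b : S) (a : S) : 𝕜) = 0 := fun b a =>
    Submodule.inner_left_of_mem_orthogonal a.2 b.2
  have hinner4 : ∀ (a c : W) (b d : Wᗮ),
      (inner 𝕜 ((a : S) + b) ((c : S) + d) : 𝕜) = inner 𝕜 a c + inner 𝕜 b d := by
    intro a c b d
    rw [inner_add_left, inner_add_right, inner_add_right, horth1 a d, horth2 b c]
    simp [Submodule.coe_inner]
  have hEqinner : ∀ u v : S, (inner 𝕜 (Eq0 u) (Eq0 v) : 𝕜) = inner 𝕜 u v := by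
    intro u v
    obtain ⟨⟨a, b⟩, rfl⟩ := p.surjective u
    obtain ⟨⟨c, d⟩, rfl⟩ := p.surjective v
    have hp1 : p (a, b) = (a : S) + b := rfl
    have hp2 : p (c, d) = (c : S) + d := rfl
    rw [hp1, hp2, hEqapply, hEqapply, hinner4, hinner4, LinearIsometryEquiv.inner_map_map]
  refine ⟨Eq0.isometryOfInner hEqinner, ?_, ?_⟩
  · intro i
    have : x i = ((x' i : S) + ((0 : Wᗮ) : S)) := by simp [hx'def]
    rw [LinearEquiv.coe_isometryOfInner, this, hEqapply, hUWx]
    simp [hy'def]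
  · intro v hv
    have : v = (((0 : W) : S) + ((⟨v, hv⟩ : Wᗮ) : S)) := by simp
    rw [LinearEquiv.coe_isometryOfInner, this, hEqapply]
    simp
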